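/- Let p be a prime, let μ be a probability measure on SL₂(𝔽_p), and let A be a finite subset of the projective line ℙ¹(𝔽_p). Set ν = μ ∗ μ̃, where μ̃(g) = μ(g⁻¹). Then for every integer ℓ ≥ 1, ⟨1_A, ∑_{g} μ(g)·(1_A ∘ τ_g)⟩ ≤ |A|^{1 − 2^{−ℓ−1}} · ‖∑_{g} ν^{(2^{ℓ−1})}(g)·(1_A ∘ τ_g)‖₂^{2^{−ℓ}}. -/

import Mathlib

open scoped Classical

/-- The Möbius action of `g = (a b; c d) ∈ SL₂(𝔽_p)` on the projective line
`ℙ¹(𝔽_p) = 𝔽_p ∪ {∞}`: `τ_g(x) = (a·x + b)/(c·x + d)`, with the usual conventions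
at `∞` (namely `τ_g(x) = ∞` if `c·x + d = 0`, `τ_g(∞) = a/c` if `c ≠ 0`, and
`τ_g(∞) = ∞` if `c = 0`). -/
noncomputable def tau {p : ℕ} [Fact p.Prime]
    (g : Matrix.SpecialLinearGroup (Fin 2) (ZMod p)) :
    OnePoint (ZMod p) → OnePoint (ZMod p) :=
  fun z =>
    Option.rec
      (if (g : Matrix (Fin 2) (Fin 2) (ZMod p)) 1 0 = 0 then OnePoint.infty
       else ((g 0 0 / g 1 0 : ZMod p) : OnePoint (ZMod p)))
      (fun x => if g 1 0 * x + g 1 1 = 0 then OnePoint.infty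
       else (((g 0 0 * x + g 0 1) / (g 1 0 * x + g 1 1) : ZMod p) : OnePoint (ZMod p)))
      z

/-- Convolution of two real functions on a finite group:
`(f₁ ∗ f₂)(x) = ∑_h f₁(h)·f₂(h⁻¹x)`. -/
noncomputable def conv {G : Type*} [Group G] [Fintype G] (f₁ f₂ : G → ℝ) : G → ℝ :=
  fun x => ∑ h, f₁ h * f₂ (h⁻¹ * x)

/-- The `ℓ`-fold convolution `f^{(ℓ)}` of `f` with itself (with `f^{(0)}` the point
mass at the identity, so that `f^{(1)} = f`). -/
noncomputable def iterConv {G : Type*} [Group G] [Fintype G] (f : G → ℝ) : ℕ → G → ℝ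
  | 0 => fun x => if x = 1 then 1 else 0
  | n + 1 => conv (iterConv f n) f

/-- The inner product `⟨u, v⟩ = ∑_x u(x)·v(x)` of two real functions on a finite type. -/
noncomputable def inner2 {X : Type*} [Fintype X] (u v : X → ℝ) : ℝ :=
  ∑ x, u x * v x

/-- `‖u‖₂ = ⟨u, u⟩^{1/2}`. -/
noncomputable def l2Norm {X : Type*} [Fintype X] (u : X → ℝ) : ℝ :=
  Real.sqrt (inner2 u u)

/-- The indicator function `1_A` of a finite set `A`, with real values. -/
noncomputable def indic {X : Type*} (A : Finset X) : X → ℝ :=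
  fun x => if x ∈ A then 1 else 0

/-- `η` is a probability measure on the finite group `G`: it is nonnegative and sums to 1. -/
def IsProbMeasure {G : Type*} [Group G] [Fintype G] (η : G → ℝ) : Prop :=
  (∀ g, 0 ≤ η g) ∧ ∑ g, η g = 1


section TauLemmas

variable {p : ℕ} [Fact p.Prime]

abbrev SL2 (p : ℕ) := Matrix.SpecialLinearGroup (Fin 2) (ZMod p)



lemma tau_infty (g : SL2 p) :
    tau g OnePoint.infty = (if (g : Matrix (Fin 2) (Fin 2) (ZMod p)) 1 0 = 0 then OnePoint.infty
       else ((g 0 0 / g 1 0 : ZMod p) : OnePoint (ZMod p))) := rfl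

lemma tau_coe (g : SL2 p) (x : ZMod p) :
    tau g (x : OnePoint (ZMod p)) = (if g 1 0 * x + g 1 1 = 0 then OnePoint.infty
       else (((g 0 0 * x + g 0 1) / (g 1 0 * x + g 1 1) : ZMod p) : OnePoint (ZMod p))) := rfl

lemma mul_entry (g h : SL2 p) (i j : Fin 2) :
    ((g*h : SL2 p) : Matrix (Fin 2) (Fin 2) (ZMod p)) i j
    = g i 0 * h 0 j + g i 1 * h 1 j := by
  simp [Matrix.mul_apply, Fin.sum_univ_two]

lemma det_entry (g : SL2 p) : g 0 0 * g 1 1 - g 0 1 * g 1 0 = 1 := by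
  have := g.2; rw [Matrix.det_fin_two] at this; exact this

lemma tau_one (z : OnePoint (ZMod p)) : tau (1 : SL2 p) z = z := by
  cases z with
  | infty => simp [tau_infty]
  | coe x => simp [tau_coe]

lemma tau_mul (g h : SL2 p) (z : OnePoint (ZMod p)) :
    tau (g * h) z = tau g (tau h z) := by
  have detg := det_entry g
  have deth := det_entry h
  cases z with
  | infty =>
    by_cases hc : h 1 0 = 0
    · have he : h 0 0 ≠ 0 := by
        intro h0; rw [h0, hc] at deth; simp at deth
      have rhs1 : tau h OnePoint.infty = OnePoint.infty := by
        rw [tau_infty, if_pos hc]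
      rw [rhs1, tau_infty (g*h), tau_infty g]
      by_cases gc : g 1 0 = 0
      · rw [if_pos gc, if_pos (by rw [mul_entry, gc, hc]; ring)]
      · have e1 : ((g*h : SL2 p) : Matrix (Fin 2) (Fin 2) (ZMod p)) 1 0 = g 1 0 * h 0 0 := by
          rw [mul_entry, hc]; ring
        have e2 : ((g*h : SL2 p) : Matrix (Fin 2) (Fin 2) (ZMod p)) 0 0 = g 0 0 * h 0 0 := by
          rw [mul_entry, hc]; ring
        rw [if_neg gc, if_neg (by rw [e1]; exact mul_ne_zero gc he), e1, e2,
          OnePoint.coe_eq_coe]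
        field_simp
    · have rhs1 : tau h OnePoint.infty = ((h 0 0 / h 1 0 : ZMod p) : OnePoint (ZMod p)) := by
        rw [tau_infty, if_neg hc]
      rw [rhs1, tau_infty (g*h), tau_coe g]
      have key : g 1 0 * (h 0 0 / h 1 0) + g 1 1
          = ((g*h : SL2 p) : Matrix (Fin 2) (Fin 2) (ZMod p)) 1 0 / h 1 0 := by
        rw [mul_entry]; field_simp
      by_cases hk : ((g*h : SL2 p) : Matrix (Fin 2) (Fin 2) (ZMod p)) 1 0 = 0
      · rw [if_pos hk, if_pos (by rw [key, hk, zero_div])]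
      · have num : g 0 0 * (h 0 0 / h 1 0) + g 0 1
            = ((g*h : SL2 p) : Matrix (Fin 2) (Fin 2) (ZMod p)) 0 0 / h 1 0 := by
          rw [mul_entry]; field_simp
        rw [if_neg hk, if_neg (by rw [key]; exact div_ne_zero hk hc), key, num,
          OnePoint.coe_eq_coe, div_div_div_cancel_right₀]
        exact hc
  | coe x =>
    by_cases hD : h 1 0 * x + h 1 1 = 0
    · have hN : h 0 0 * x + h 0 1 ≠ 0 := by
        intro h0
        have : (1 : ZMod p) = 0 := by
          linear_combination -deth - h 1 0 * h0 + h 0 0 * hD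
        exact one_ne_zero this
      have rhs1 : tau h (x : OnePoint (ZMod p)) = OnePoint.infty := by
        rw [tau_coe, if_pos hD]
      rw [rhs1, tau_coe (g*h) x, tau_infty g]
      by_cases gc : g 1 0 = 0
      · rw [if_pos gc, if_pos ?_]
        rw [mul_entry, mul_entry]
        linear_combination g 1 1 * hD + (h 0 0 * x + h 0 1) * gc
      · have e1 : ((g*h : SL2 p) : Matrix (Fin 2) (Fin 2) (ZMod p)) 1 0 * x
            + ((g*h : SL2 p) : Matrix (Fin 2) (Fin 2) (ZMod p)) 1 1
            = g 1 0 * (h 0 0 * x + h 0 1) := by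
          rw [mul_entry, mul_entry]; linear_combination g 1 1 * hD
        have e2 : ((g*h : SL2 p) : Matrix (Fin 2) (Fin 2) (ZMod p)) 0 0 * x
            + ((g*h : SL2 p) : Matrix (Fin 2) (Fin 2) (ZMod p)) 0 1
            = g 0 0 * (h 0 0 * x + h 0 1) := by
          rw [mul_entry, mul_entry]; linear_combination g 0 1 * hD
        rw [if_neg gc, if_neg (by rw [e1]; exact mul_ne_zero gc hN), e1, e2,
          OnePoint.coe_eq_coe]
        field_simp
    · have rhs1 : tau h (x : OnePoint (ZMod p))
          = (((h 0 0 * x + h 0 1) / (h 1 0 * x + h 1 1) : ZMod p) : OnePoint (ZMod p)) := by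
        rw [tau_coe, if_neg hD]
      rw [rhs1, tau_coe (g*h) x, tau_coe g]
      have key : g 1 0 * ((h 0 0 * x + h 0 1) / (h 1 0 * x + h 1 1)) + g 1 1
          = (((g*h : SL2 p) : Matrix (Fin 2) (Fin 2) (ZMod p)) 1 0 * x
            + ((g*h : SL2 p) : Matrix (Fin 2) (Fin 2) (ZMod p)) 1 1) / (h 1 0 * x + h 1 1) := by
        rw [mul_entry, mul_entry, eq_div_iff hD]; simp only [add_mul, mul_assoc, div_mul_cancel₀ _ hD]; ring
      by_cases hk : ((g*h : SL2 p) : Matrix (Fin 2) (Fin 2) (ZMod p)) 1 0 * x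
            + ((g*h : SL2 p) : Matrix (Fin 2) (Fin 2) (ZMod p)) 1 1 = 0
      · rw [if_pos hk, if_pos (by rw [key, hk, zero_div])]
      · have num : g 0 0 * ((h 0 0 * x + h 0 1) / (h 1 0 * x + h 1 1)) + g 0 1
            = (((g*h : SL2 p) : Matrix (Fin 2) (Fin 2) (ZMod p)) 0 0 * x
              + ((g*h : SL2 p) : Matrix (Fin 2) (Fin 2) (ZMod p)) 0 1) / (h 1 0 * x + h 1 1) := by
          rw [mul_entry, mul_entry, eq_div_iff hD]; simp only [add_mul, mul_assoc, div_mul_cancel₀ _ hD]; ring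
        rw [if_neg hk, if_neg (by rw [key]; exact div_ne_zero hk hD), key, num,
          OnePoint.coe_eq_coe, div_div_div_cancel_right₀]
        exact hD


end TauLemmas

section ConvLemmas

variable {G : Type*} [Group G] [Fintype G]

lemma delta_conv (f : G → ℝ) : conv (fun x => if x = 1 then 1 else 0) f = f := by
  funext x
  unfold conv
  rw [Finset.sum_eq_single 1] <;> simp +contextual

lemma conv_delta (f : G → ℝ) : conv f (fun x => if x = 1 then 1 else 0) = f := by
  funext x
  unfold conv
  rw [Finset.sum_eq_single x] <;> simp +contextual [inv_mul_eq_one, eq_comm]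

lemma conv_assoc (a b c : G → ℝ) : conv (conv a b) c = conv a (conv b c) := by
  funext x
  unfold conv
  simp_rw [Finset.sum_mul, Finset.mul_sum]
  rw [Finset.sum_comm]
  refine Finset.sum_congr rfl fun k _ => ?_
  rw [← Equiv.sum_comp (Equiv.mulLeft k) (fun h => a k * b (k⁻¹ * h) * c (h⁻¹ * x))]
  refine Finset.sum_congr rfl fun m _ => ?_
  simp [mul_inv_rev, mul_assoc]

lemma iterConv_zero (f : G → ℝ) : iterConv f 0 = (fun x => if x = 1 then 1 else 0) := rfl

lemma iterConv_succ (f : G → ℝ) (n : ℕ) : iterConv f (n + 1) = conv (iterConv f n) f := rfl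

lemma iterConv_one (f : G → ℝ) : iterConv f 1 = f := by
  rw [iterConv_succ, iterConv_zero, delta_conv]

lemma iterConv_succ' (f : G → ℝ) (n : ℕ) :
    iterConv f (n + 1) = conv f (iterConv f n) := by
  induction n with
  | zero => rw [iterConv_succ, iterConv_zero, delta_conv, conv_delta]
  | succ n ih =>
    rw [iterConv_succ f (n+1), ih, conv_assoc, ← iterConv_succ, ih]

lemma iterConv_add (f : G → ℝ) (m n : ℕ) :
    iterConv f (m + n) = conv (iterConv f m) (iterConv f n) := by
  induction n with
  | zero => rw [Nat.add_zero, iterConv_zero, conv_delta]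
  | succ n ih =>
    rw [show m + (n + 1) = (m + n) + 1 from rfl, iterConv_succ, ih, conv_assoc,
      ← iterConv_succ]

lemma conv_tilde (f₁ f₂ : G → ℝ) :
    (fun x => conv f₁ f₂ x⁻¹) = conv (fun g => f₂ g⁻¹) (fun g => f₁ g⁻¹) := by
  funext x
  show conv f₁ f₂ x⁻¹ = ∑ h, f₂ h⁻¹ * f₁ ((h⁻¹ * x)⁻¹)
  unfold conv
  rw [← Equiv.sum_comp (Equiv.mulLeft x) (fun h => f₂ h⁻¹ * f₁ ((h⁻¹ * x)⁻¹))]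
  refine Finset.sum_congr rfl fun k _ => ?_
  simp [mul_inv_rev, mul_assoc]
  ring

end ConvLemmas

section OpLemmas

variable {p : ℕ} [Fact p.Prime]

/-- The averaging operator. -/
noncomputable def Tavg (η : SL2 p → ℝ) (u : OnePoint (ZMod p) → ℝ) :
    OnePoint (ZMod p) → ℝ :=
  fun x => ∑ g, η g * u (tau g x)

/-- `tau g` as an equivalence. -/
noncomputable def tauE (g : SL2 p) : OnePoint (ZMod p) ≃ OnePoint (ZMod p) where
  toFun := tau g
  invFun := tau g⁻¹
  left_inv z := by rw [← tau_mul, inv_mul_cancel, tau_one]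
  right_inv z := by rw [← tau_mul, mul_inv_cancel, tau_one]

lemma inner2_Tavg (η : SL2 p → ℝ) (u v : OnePoint (ZMod p) → ℝ) :
    inner2 (Tavg η u) v = inner2 u (Tavg (fun g => η g⁻¹) v) := by
  unfold inner2 Tavg
  simp_rw [Finset.sum_mul, Finset.mul_sum]
  rw [Finset.sum_comm]
  conv_rhs => rw [Finset.sum_comm]
  rw [← Equiv.sum_comp (Equiv.inv (SL2 p))
    (fun g => ∑ z, u z * (η g⁻¹ * v (tau g z)))]
  refine Finset.sum_congr rfl fun g _ => ?_
  rw [← Equiv.sum_comp (tauE (g⁻¹ : SL2 p)) (fun z => η g * u (tau g z) * v z)]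
  refine Finset.sum_congr rfl fun z _ => ?_
  show η g * u (tau g (tau g⁻¹ z)) * v (tau g⁻¹ z) = u z * (η (g⁻¹)⁻¹ * v (tau g⁻¹ z))
  rw [← tau_mul, mul_inv_cancel, tau_one, inv_inv]
  ring

lemma Tavg_Tavg (η ζ : SL2 p → ℝ) (u : OnePoint (ZMod p) → ℝ) :
    Tavg η (Tavg ζ u) = Tavg (conv ζ η) u := by
  funext x
  unfold Tavg conv
  calc ∑ g, η g * ∑ h, ζ h * u (tau h (tau g x))
      = ∑ g, ∑ h, ζ h * η g * u (tau (h * g) x) := by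
        refine Finset.sum_congr rfl fun g _ => ?_
        rw [Finset.mul_sum]
        refine Finset.sum_congr rfl fun h _ => ?_
        rw [tau_mul]; ring
    _ = ∑ h, ∑ g, ζ h * η g * u (tau (h * g) x) := Finset.sum_comm
    _ = ∑ h, ∑ k, ζ h * η (h⁻¹ * k) * u (tau k x) := by
        refine Finset.sum_congr rfl fun h _ => ?_
        rw [← Equiv.sum_comp (Equiv.mulLeft h) (fun k => ζ h * η (h⁻¹ * k) * u (tau k x))]
        refine Finset.sum_congr rfl fun g _ => ?_
        simp
    _ = ∑ k, (∑ h, ζ h * η (h⁻¹ * k)) * u (tau k x) := by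
        rw [Finset.sum_comm]
        exact Finset.sum_congr rfl fun k _ => (Finset.sum_mul _ _ _).symm

lemma inner2_self_nonneg {X : Type*} [Fintype X] (u : X → ℝ) : 0 ≤ inner2 u u :=
  Finset.sum_nonneg fun x _ => mul_self_nonneg _

lemma cauchy_schwarz {X : Type*} [Fintype X] (u v : X → ℝ) :
    inner2 u v ≤ l2Norm u * l2Norm v := by
  unfold l2Norm inner2
  have h := Finset.sum_mul_sq_le_sq_mul_sq Finset.univ u v
  calc ∑ x, u x * v x ≤ |∑ x, u x * v x| := le_abs_self _
    _ = Real.sqrt ((∑ x, u x * v x) ^ 2) := (Real.sqrt_sq_eq_abs _).symm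
    _ ≤ Real.sqrt ((∑ x, u x ^ 2) * ∑ x, v x ^ 2) := Real.sqrt_le_sqrt h
    _ = _ := by
        rw [Real.sqrt_mul (by positivity)]
        simp_rw [sq]

lemma inner2_indic (A : Finset (OnePoint (ZMod p))) :
    inner2 (indic A) (indic A) = (A.card : ℝ) := by
  unfold inner2 indic
  simp [ite_and, Finset.sum_ite_mem]

end OpLemmas

/-- Iterated Cauchy–Schwarz: for a probability measure `μ` on `SL₂(𝔽_p)`,
`ν = μ ∗ μ̃`, a finite set `A ⊆ ℙ¹(𝔽_p)` and every integer `ℓ ≥ 1`,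
`⟨1_A, ∑_g μ(g)·(1_A ∘ τ_g)⟩ ≤ |A|^{1 − 2^{−ℓ−1}} · ‖∑_g ν^{(2^{ℓ−1})}(g)·(1_A ∘ τ_g)‖₂^{2^{−ℓ}}`. -/
theorem iterated_cauchy_schwarz_step
    (p : ℕ) [Fact p.Prime]
    (μ : Matrix.SpecialLinearGroup (Fin 2) (ZMod p) → ℝ)
    (hμ : IsProbMeasure μ)
    (A : Finset (OnePoint (ZMod p)))
    (ℓ : ℕ) (hℓ : 1 ≤ ℓ) :
    inner2 (indic A) (fun x => ∑ g, μ g * indic A (tau g x))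
      ≤ (A.card : ℝ) ^ (1 - (2 : ℝ) ^ (-(ℓ : ℝ) - 1)) *
        l2Norm (fun x => ∑ g,
            iterConv (conv μ (fun h => μ h⁻¹)) (2 ^ (ℓ - 1)) g * indic A (tau g x))
          ^ ((2 : ℝ) ^ (-(ℓ : ℝ))) := by
  classical
  set u := indic A with hu
  set ν := conv μ (fun h => μ h⁻¹) with hν
  set a : ℝ := (A.card : ℝ) with ha
  have ha0 : 0 ≤ a := by positivity
  have hsymm : (fun g => ν g⁻¹) = ν := by
    rw [hν, conv_tilde]
    congr 1
    funext g; simp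
  have hiter_symm : ∀ m, (fun g => iterConv ν m g⁻¹) = iterConv ν m := by
    intro m
    induction m with
    | zero => funext g; simp [iterConv_zero, inv_eq_one]
    | succ m ih =>
      rw [iterConv_succ' ν m, conv_tilde, ih, hsymm, ← iterConv_succ', iterConv_succ]
  set F : ℕ → ℝ := fun m => inner2 u (Tavg (iterConv ν m) u) with hF
  have key : ∀ m, inner2 (Tavg (iterConv ν m) u) (Tavg (iterConv ν m) u) = F (m + m) := by
    intro m
    rw [inner2_Tavg, Tavg_Tavg, hiter_symm, ← iterConv_add]
  have base : inner2 (Tavg μ u) (Tavg μ u) = F 1 := by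
    rw [inner2_Tavg, Tavg_Tavg, hF]
    show _ = inner2 u (Tavg (iterConv ν 1) u)
    rw [iterConv_one]
  have hF1 : 0 ≤ F 1 := base ▸ inner2_self_nonneg _
  have hFnn : ∀ j : ℕ, 0 ≤ F (2 ^ j) := by
    intro j
    cases j with
    | zero => simpa using hF1
    | succ j =>
      have h2 : (2:ℕ) ^ (j+1) = 2 ^ j + 2 ^ j := by ring
      rw [h2, ← key]
      exact inner2_self_nonneg _
  have hnormu : l2Norm u = Real.sqrt a := by rw [l2Norm, hu, inner2_indic]
  have csF : ∀ m, F m ≤ Real.sqrt a * Real.sqrt (F (m + m)) := by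
    intro m
    calc F m ≤ l2Norm u * l2Norm (Tavg (iterConv ν m) u) := cauchy_schwarz _ _
      _ = Real.sqrt a * Real.sqrt (F (m + m)) := by rw [hnormu, l2Norm, key]
  have sqrt_rpow : ∀ x : ℝ, Real.sqrt x = x ^ (1/2 : ℝ) := fun x => Real.sqrt_eq_rpow x
  have claim : ∀ j : ℕ, inner2 u (Tavg μ u)
      ≤ a ^ (1 - (2:ℝ) ^ (-(j:ℝ) - 1)) * (F (2 ^ j)) ^ ((2:ℝ) ^ (-(j:ℝ) - 1)) := by
    intro j
    induction j with
    | zero =>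
      have h1 : inner2 u (Tavg μ u) ≤ l2Norm u * l2Norm (Tavg μ u) := cauchy_schwarz _ _
      have h2 : l2Norm (Tavg μ u) = Real.sqrt (F 1) := by rw [l2Norm, base]
      have he : (2:ℝ) ^ (-((0:ℕ):ℝ) - 1) = 1/2 := by
        rw [show (-((0:ℕ):ℝ) - 1) = (-1 : ℝ) by push_cast; ring, Real.rpow_neg_one]
        norm_num
      rw [he]
      calc inner2 u (Tavg μ u) ≤ Real.sqrt a * Real.sqrt (F 1) := by
            rw [← hnormu, ← h2]; exact h1
        _ = a ^ (1 - 1/2 : ℝ) * (F (2^0)) ^ (1/2 : ℝ) := by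
            rw [sqrt_rpow, sqrt_rpow]; norm_num
    | succ j ih =>
      have e1 : (0:ℝ) ≤ (2:ℝ) ^ (-(j:ℝ) - 1) := by positivity
      have hstep : F (2 ^ j) ≤ Real.sqrt a * Real.sqrt (F (2 ^ (j+1))) := by
        have h2 : (2:ℕ) ^ (j+1) = 2 ^ j + 2 ^ j := by ring
        rw [h2]; exact csF (2 ^ j)
      have hpow : (F (2 ^ j)) ^ ((2:ℝ) ^ (-(j:ℝ) - 1))
          ≤ (Real.sqrt a * Real.sqrt (F (2 ^ (j+1)))) ^ ((2:ℝ) ^ (-(j:ℝ) - 1)) :=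
        Real.rpow_le_rpow (hFnn j) hstep e1
      have expand : (Real.sqrt a * Real.sqrt (F (2 ^ (j+1)))) ^ ((2:ℝ) ^ (-(j:ℝ) - 1))
          = a ^ ((2:ℝ) ^ (-(j:ℝ) - 2)) * (F (2 ^ (j+1))) ^ ((2:ℝ) ^ (-(j:ℝ) - 2)) := by
        rw [Real.mul_rpow (Real.sqrt_nonneg _) (Real.sqrt_nonneg _), sqrt_rpow, sqrt_rpow,
          ← Real.rpow_mul ha0, ← Real.rpow_mul (hFnn (j+1))]
        have hh : (1/2 : ℝ) * (2:ℝ) ^ (-(j:ℝ) - 1) = (2:ℝ) ^ (-(j:ℝ) - 2) := by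
          rw [show (-(j:ℝ) - 2) = (-(j:ℝ) - 1) + (-1) by ring, Real.rpow_add (by norm_num),
            Real.rpow_neg_one]
          ring
        rw [hh]
      have h2le : (2:ℝ) ^ (-(j:ℝ) - 1) ≤ 1 := by
        apply Real.rpow_le_one_of_one_le_of_nonpos (by norm_num)
        have : (0:ℝ) ≤ (j:ℝ) := Nat.cast_nonneg j
        linarith
      calc inner2 u (Tavg μ u)
          ≤ a ^ (1 - (2:ℝ) ^ (-(j:ℝ) - 1)) * (F (2 ^ j)) ^ ((2:ℝ) ^ (-(j:ℝ) - 1)) := ih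
        _ ≤ a ^ (1 - (2:ℝ) ^ (-(j:ℝ) - 1)) *
            (a ^ ((2:ℝ) ^ (-(j:ℝ) - 2)) * (F (2 ^ (j+1))) ^ ((2:ℝ) ^ (-(j:ℝ) - 2))) := by
            rw [← expand]
            exact mul_le_mul_of_nonneg_left hpow (Real.rpow_nonneg ha0 _)
        _ = a ^ (1 - (2:ℝ) ^ (-((j:ℕ)+1:ℝ) - 1)) * (F (2 ^ (j+1))) ^ ((2:ℝ) ^ (-((j:ℕ)+1:ℝ) - 1)) := by
            rw [← mul_assoc, ← Real.rpow_add_of_nonneg ha0 (by linarith) (by positivity)]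
            have hexp : (-((j:ℕ)+1:ℝ) - 1) = (-(j:ℝ) - 2) := by push_cast; ring
            rw [hexp]
            congr 2
            rw [show (-(j:ℝ) - 1) = (-(j:ℝ) - 2) + 1 by ring, Real.rpow_add (by norm_num),
              Real.rpow_one]
            ring
        _ = a ^ (1 - (2:ℝ) ^ (-((j+1:ℕ):ℝ) - 1)) * (F (2 ^ (j+1))) ^ ((2:ℝ) ^ (-((j+1:ℕ):ℝ) - 1)) := by
            norm_num
  obtain ⟨k, rfl⟩ : ∃ k, ℓ = k + 1 := ⟨ℓ - 1, (Nat.succ_pred_eq_of_pos hℓ).symm⟩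
  have hc := claim (k + 1)
  have hsplit : (2:ℕ) ^ (k + 1) = 2 ^ k + 2 ^ k := by ring
  have hl2 : l2Norm (fun x => ∑ g, iterConv ν (2 ^ ((k+1) - 1)) g * u (tau g x))
      = Real.sqrt (F (2 ^ (k+1))) := by
    show l2Norm (Tavg (iterConv ν (2 ^ k)) u) = _
    rw [l2Norm, key, ← hsplit]
  have hLHS : inner2 (indic A) (fun x => ∑ g, μ g * indic A (tau g x))
      = inner2 u (Tavg μ u) := rfl
  rw [hLHS, hl2, sqrt_rpow, ← Real.rpow_mul (hFnn (k+1))]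
  have hfin : (1/2 : ℝ) * (2:ℝ) ^ (-((k+1:ℕ):ℝ)) = (2:ℝ) ^ (-((k+1:ℕ):ℝ) - 1) := by
    rw [show (-((k+1:ℕ):ℝ) - 1) = (-((k+1:ℕ):ℝ)) + (-1) by ring, Real.rpow_add (by norm_num),
      Real.rpow_neg_one]
    ring
  rw [hfin]
  exact hc
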